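/- arXiv:2512.01355 — 5 statements merged into one kernel-verified Lean document; each statement's English description precedes it below -/
import Mathlib

section
/- Let F : ℂⁿ → ℂⁿ be continuously differentiable, let x ∈ ℂⁿ, r > 0, 0 < ρ < 1, and let Y : ℂⁿ → ℂⁿ be an invertible continuous linear map. Assume the pointwise Krawczyk condition holds for (F, x, r, Y, ρ). Then there exists a unique point x* in the closed ball of radius r centered at x with F(x*) = 0, and moreover ‖x − x*‖ ≤ r·ρ. -/
/-- The pointwise Krawczyk condition for `(F, x, r, Y, ρ)`:
for every `z` in the closed ball of radius `r` around `x` and every `v` with `‖v‖ ≤ r`,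
`‖-Y (F x) + v - Y (DF(z) v)‖ ≤ r * ρ`. -/
def KrawczykCond {n : ℕ} (F : (Fin n → ℂ) → (Fin n → ℂ)) (x : Fin n → ℂ) (r : ℝ)
    (Y : (Fin n → ℂ) →L[ℂ] (Fin n → ℂ)) (ρ : ℝ) : Prop :=
  ∀ z ∈ Metric.closedBall x r, ∀ v : Fin n → ℂ, ‖v‖ ≤ r →
    ‖-Y (F x) + v - Y (fderiv ℂ F z v)‖ ≤ r * ρ

set_option maxHeartbeats 1000000 in
/-- Krawczyk certification theorem: the pointwise Krawczyk condition with `0 < ρ < 1`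
yields a unique zero `x⋆` of `F` in the closed ball of radius `r` around `x`, with
`‖x - x⋆‖ ≤ r * ρ`. -/
theorem krawczyk_unique_zero {n : ℕ} (F : (Fin n → ℂ) → (Fin n → ℂ))
    (hF : ContDiff ℂ 1 F) (x : Fin n → ℂ) (r ρ : ℝ) (hr : 0 < r)
    (hρ0 : 0 < ρ) (hρ1 : ρ < 1) (Y : (Fin n → ℂ) ≃L[ℂ] (Fin n → ℂ))
    (hK : KrawczykCond F x r (Y : (Fin n → ℂ) →L[ℂ] (Fin n → ℂ)) ρ) :
    ∃ xs ∈ Metric.closedBall x r, F xs = 0 ∧ ‖x - xs‖ ≤ r * ρ ∧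
      ∀ y ∈ Metric.closedBall x r, F y = 0 → y = xs := by
  classical
  set Yc : (Fin n → ℂ) →L[ℂ] (Fin n → ℂ) := (Y : (Fin n → ℂ) →L[ℂ] (Fin n → ℂ)) with hYc
  set T : (Fin n → ℂ) → (Fin n → ℂ) := fun y => y - Yc (F y) with hT
  have hFdiff : Differentiable ℂ F := hF.differentiable one_ne_zero
  have hcb : Convex ℝ (Metric.closedBall x r) := convex_closedBall x r
  -- Step 1: averaged Krawczyk condition: ‖v - Y (DF z v)‖ ≤ ρ * ‖v‖ for all v.
  have hlin : ∀ z ∈ Metric.closedBall x r, ∀ v : Fin n → ℂ,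
      ‖v - Yc (fderiv ℂ F z v)‖ ≤ ρ * ‖v‖ := by
    intro z hz v
    -- first for ‖v‖ ≤ r
    have key : ∀ w : Fin n → ℂ, ‖w‖ ≤ r → ‖w - Yc (fderiv ℂ F z w)‖ ≤ r * ρ := by
      intro w hw
      have h1 := hK z hz w hw
      have h2 := hK z hz (-w) (by simpa using hw)
      have h3 : ‖(2 : ℝ) • (w - Yc (fderiv ℂ F z w))‖ ≤ r * ρ + r * ρ := by
        have he : (2 : ℝ) • (w - Yc (fderiv ℂ F z w))
            = (-Yc (F x) + w - Yc (fderiv ℂ F z w))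
              - (-Yc (F x) + -w - Yc (fderiv ℂ F z (-w))) := by
          simp only [map_neg]
          module
        rw [he]
        exact norm_sub_le_of_le h1 h2
      rw [norm_smul, Real.norm_ofNat] at h3
      nlinarith [norm_nonneg (w - Yc (fderiv ℂ F z w))]
    rcases eq_or_ne v 0 with rfl | hv
    · simp
    · have hvpos : (0 : ℝ) < ‖v‖ := norm_pos_iff.mpr hv
      have hscale := key ((r / ‖v‖) • v) (by
        rw [norm_smul, Real.norm_eq_abs, abs_of_pos (by positivity)]
        rw [div_mul_cancel₀ _ hvpos.ne'])
      have hmap : ((r / ‖v‖) • v) - Yc (fderiv ℂ F z ((r / ‖v‖) • v))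
          = (r / ‖v‖) • (v - Yc (fderiv ℂ F z v)) := by
        rw [(fderiv ℂ F z).map_smul_of_tower, Yc.map_smul_of_tower, smul_sub]
      rw [hmap, norm_smul, Real.norm_eq_abs, abs_of_pos (by positivity)] at hscale
      calc ‖v - Yc (fderiv ℂ F z v)‖
          = (‖v‖ / r) * ((r / ‖v‖) * ‖v - Yc (fderiv ℂ F z v)‖) := by
            field_simp
        _ ≤ (‖v‖ / r) * (r * ρ) := by
            apply mul_le_mul_of_nonneg_left hscale (by positivity)
        _ = ρ * ‖v‖ := by field_simp
  -- operator norm bound for id - Y ∘ DF z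
  have hop : ∀ z ∈ Metric.closedBall x r,
      ‖ContinuousLinearMap.id ℂ (Fin n → ℂ) - Yc.comp (fderiv ℂ F z)‖ ≤ ρ := by
    intro z hz
    apply ContinuousLinearMap.opNorm_le_bound _ hρ0.le
    intro v
    simpa using hlin z hz v
  -- Step 2: T maps the ball into the ρr-ball: ‖T y - x‖ ≤ r * ρ for y in ball.
  have hball : ∀ y ∈ Metric.closedBall x r, ‖T y - x‖ ≤ r * ρ := by
    intro y hy
    set v : Fin n → ℂ := y - x with hv
    have hvr : ‖v‖ ≤ r := by
      rw [hv, ← dist_eq_norm]; exact Metric.mem_closedBall.mp hy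
    have hmem : ∀ t : ℝ, 0 ≤ t → t ≤ 1 → x + t • v ∈ Metric.closedBall x r := by
      intro t ht0 ht1
      rw [Metric.mem_closedBall, dist_eq_norm]
      have h4 : x + t • v - x = t • v := by abel
      rw [h4, norm_smul, Real.norm_eq_abs, abs_of_nonneg ht0]
      calc t * ‖v‖ ≤ 1 * ‖v‖ := by
            apply mul_le_mul_of_nonneg_right ht1 (norm_nonneg _)
        _ ≤ r := by simpa using hvr
    have hderiv : ∀ t : ℝ, HasDerivAt (fun s : ℝ => F (x + s • v))
        (fderiv ℂ F (x + t • v) v) t := by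
      intro t
      have hinner : HasDerivAt (fun s : ℝ => x + s • v) v t := by
        simpa using ((hasDerivAt_id t).smul_const v).const_add x
      have houter := (hFdiff (x + t • v)).hasFDerivAt
      have := (houter.restrictScalars ℝ).comp_hasDerivAt t hinner
      exact this
    have hcont : Continuous fun t : ℝ => fderiv ℂ F (x + t • v) v := by
      have h1 : Continuous (fderiv ℂ F) := (hF.fderiv_right (m := 0) (by norm_num)).continuous
      have h2 : Continuous fun t : ℝ => x + t • v :=
        continuous_const.add (continuous_id.smul continuous_const)
      exact (ContinuousLinearMap.apply ℂ (Fin n → ℂ) v).continuous.comp (h1.comp h2)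
    have hInt : IntervalIntegrable (fun t : ℝ => fderiv ℂ F (x + t • v) v)
        MeasureTheory.volume 0 1 := hcont.intervalIntegrable 0 1
    have hFT : F y - F x = ∫ t in (0:ℝ)..1, fderiv ℂ F (x + t • v) v := by
      have := intervalIntegral.integral_eq_sub_of_hasDerivAt
        (f := fun s : ℝ => F (x + s • v)) (f' := fun t => fderiv ℂ F (x + t • v) v)
        (fun t ht => hderiv t) hInt
      rw [this]
      simp [hv]
    have hIntY : IntervalIntegrable (fun t : ℝ => Yc (fderiv ℂ F (x + t • v) v))
        MeasureTheory.volume 0 1 := (Yc.continuous.comp hcont).intervalIntegrable 0 1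
    have hYint : Yc (F y - F x) = ∫ t in (0:ℝ)..1, Yc (fderiv ℂ F (x + t • v) v) := by
      rw [hFT, ← ContinuousLinearMap.intervalIntegral_comp_comm _ hInt]
    have hTrep : T y - x = ∫ t in (0:ℝ)..1,
        (-Yc (F x) + v - Yc (fderiv ℂ F (x + t • v) v)) := by
      rw [intervalIntegral.integral_sub (intervalIntegrable_const) hIntY]
      rw [intervalIntegral.integral_const, ← hYint]
      have hFy : Yc (F y) = Yc (F x) + Yc (F y - F x) := by
        rw [← map_add]; congr 1; abel
      simp only [hT, hv]
      rw [hFy]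
      simp
      abel
    rw [hTrep]
    have := intervalIntegral.norm_integral_le_of_norm_le_const
      (C := r * ρ) (a := (0:ℝ)) (b := 1)
      (f := fun t => -Yc (F x) + v - Yc (fderiv ℂ F (x + t • v) v)) ?_
    · simpa using this
    · intro t ht
      rw [Set.uIoc_of_le (by norm_num : (0:ℝ) ≤ 1)] at ht
      exact hK (x + t • v) (hmem t ht.1.le ht.2) v hvr
  -- Step 3: T is a ρ-contraction on the ball.
  have hTderiv : ∀ z ∈ Metric.closedBall x r, HasFDerivWithinAt T
      (ContinuousLinearMap.id ℂ (Fin n → ℂ) - Yc.comp (fderiv ℂ F z))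
      (Metric.closedBall x r) z := by
    intro z hz
    have h1 : HasFDerivAt F (fderiv ℂ F z) z := (hFdiff z).hasFDerivAt
    have h2 : HasFDerivAt (fun y => Yc (F y)) (Yc.comp (fderiv ℂ F z)) z :=
      Yc.hasFDerivAt.comp z h1
    have h3 : HasFDerivAt T
        (ContinuousLinearMap.id ℂ (Fin n → ℂ) - Yc.comp (fderiv ℂ F z)) z :=
      (hasFDerivAt_id z).sub h2
    exact h3.hasFDerivWithinAt
  have hlip : ∀ y ∈ Metric.closedBall x r, ∀ y' ∈ Metric.closedBall x r,
      ‖T y - T y'‖ ≤ ρ * ‖y - y'‖ := by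
    intro y hy y' hy'
    exact hcb.norm_image_sub_le_of_norm_hasFDerivWithin_le hTderiv hop hy' hy
  -- Step 4: Banach fixed point on the closed ball.
  have hmapsto : ∀ y ∈ Metric.closedBall x r, T y ∈ Metric.closedBall x r := by
    intro y hy
    rw [Metric.mem_closedBall, dist_eq_norm]
    calc ‖T y - x‖ ≤ r * ρ := hball y hy
      _ ≤ r * 1 := by nlinarith
      _ = r := mul_one r
  haveI : Nonempty (Metric.closedBall x r) := ⟨⟨x, Metric.mem_closedBall_self hr.le⟩⟩
  haveI : CompleteSpace (Metric.closedBall x r) :=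
    Metric.isClosed_closedBall.completeSpace_coe
  set T' : (Metric.closedBall x r) → (Metric.closedBall x r) :=
    fun y => ⟨T y.1, hmapsto y.1 y.2⟩ with hT'
  set K : NNReal := ⟨ρ, hρ0.le⟩ with hKdef
  have hcontract : ContractingWith K T' := by
    constructor
    · exact_mod_cast hρ1
    · apply LipschitzWith.of_dist_le_mul
      intro a b
      simp only [Subtype.dist_eq, dist_eq_norm]
      exact hlip a.1 a.2 b.1 b.2
  set xs' : (Metric.closedBall x r) := ContractingWith.fixedPoint T' hcontract with hxs'
  have hfix' : T' xs' = xs' := hcontract.fixedPoint_isFixedPt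
  set xs : Fin n → ℂ := xs'.1 with hxsdef
  have hxsmem : xs ∈ Metric.closedBall x r := xs'.2
  have hfix : T xs = xs := congrArg Subtype.val hfix'
  have hYF : Yc (F xs) = 0 := by
    have : xs - Yc (F xs) = xs := hfix
    have h := sub_eq_self.mp this
    exact h
  have hFxs : F xs = 0 := by
    have := congrArg Y.symm hYF
    simpa [hYc] using this
  refine ⟨xs, hxsmem, hFxs, ?_, ?_⟩
  · rw [norm_sub_rev]
    calc ‖xs - x‖ = ‖T xs - x‖ := by rw [hfix]
      _ ≤ r * ρ := hball xs hxsmem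
  · intro y hy hFy
    have hTy : T y = y := by
      simp only [hT]
      rw [hFy]
      simp
    have h1 : ‖y - xs‖ ≤ ρ * ‖y - xs‖ := by
      calc ‖y - xs‖ = ‖T y - T xs‖ := by rw [hTy, hfix]
        _ ≤ ρ * ‖y - xs‖ := hlip y hy xs hxsmem
    have h2 : ‖y - xs‖ = 0 := by nlinarith [norm_nonneg (y - xs)]
    exact sub_eq_zero.mp (norm_eq_zero.mp h2)
end

section
/- Let F : ℂⁿ → ℂⁿ be continuously differentiable, let x ∈ ℂⁿ, r > 0, ρ > 0, and let Y : ℂⁿ → ℂⁿ be a continuous linear map. Assume the pointwise Krawczyk condition holds for (F, x, r, Y, ρ). Then the quasi-Newton map g(y) = y − Y(F(y)) is ρ-Lipschitz on the closed ball of radius r centered at x, and g maps that closed ball into the closed ball of radius r·ρ centered at x. -/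
/-- Under the pointwise Krawczyk condition, the quasi-Newton map `g y = y - Y (F y)`
is `ρ`-Lipschitz on the closed ball of radius `r` around `x` and maps that ball
into the closed ball of radius `r * ρ` around `x`. -/
theorem krawczyk_quasiNewton_lipschitz_and_maps {n : ℕ}
    (F : (Fin n → ℂ) → (Fin n → ℂ)) (hF : ContDiff ℂ 1 F)
    (x : Fin n → ℂ) (r ρ : ℝ) (hr : 0 < r) (hρ : 0 < ρ)
    (Y : (Fin n → ℂ) →L[ℂ] (Fin n → ℂ))
    (hK : KrawczykCond F x r Y ρ) :
    (∀ y₁ ∈ Metric.closedBall x r, ∀ y₂ ∈ Metric.closedBall x r,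
      ‖(y₁ - Y (F y₁)) - (y₂ - Y (F y₂))‖ ≤ ρ * ‖y₁ - y₂‖) ∧
    (∀ y ∈ Metric.closedBall x r, (y - Y (F y)) ∈ Metric.closedBall x (r * ρ)) := by
  have hFd : Differentiable ℂ F := hF.differentiable one_ne_zero
  -- Key pointwise operator bound: `‖(I - Y ∘ DF z) v‖ ≤ ρ ‖v‖` on the ball.
  have key : ∀ z ∈ Metric.closedBall x r, ∀ v : Fin n → ℂ,
      ‖v - Y (fderiv ℂ F z v)‖ ≤ ρ * ‖v‖ := by
    intro z hz v
    have key' : ∀ w : Fin n → ℂ, ‖w‖ ≤ r → ‖w - Y (fderiv ℂ F z w)‖ ≤ r * ρ := by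
      intro w hw
      have h1 := hK z hz w hw
      have h2 := hK z hz (-w) (by simpa using hw)
      have e2 : (-Y (F x) + w - Y (fderiv ℂ F z w)) -
          (-Y (F x) + -w - Y (fderiv ℂ F z (-w))) =
          (2:ℝ) • (w - Y (fderiv ℂ F z w)) := by
        simp [map_neg, two_smul]
        abel
      have h3 : ‖(2:ℝ) • (w - Y (fderiv ℂ F z w))‖ ≤ r * ρ + r * ρ := by
        rw [← e2]
        exact le_trans (norm_sub_le _ _) (add_le_add h1 h2)
      rw [norm_smul] at h3
      simp at h3
      linarith
    rcases eq_or_ne v 0 with rfl | hv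
    · simp
    · have hvn : 0 < ‖v‖ := norm_pos_iff.mpr hv
      set c : ℝ := r / ‖v‖ with hc
      have hcpos : 0 < c := div_pos hr hvn
      have hcv : ‖c • v‖ = r := by
        rw [norm_smul, Real.norm_eq_abs, abs_of_pos hcpos, hc, div_mul_cancel₀ _ hvn.ne']
      have h4 := key' (c • v) hcv.le
      have e3 : c • v - Y (fderiv ℂ F z (c • v)) = c • (v - Y (fderiv ℂ F z v)) := by
        rw [ContinuousLinearMap.map_smul_of_tower, ContinuousLinearMap.map_smul_of_tower,
          smul_sub]
      rw [e3, norm_smul, Real.norm_eq_abs, abs_of_pos hcpos] at h4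
      rw [hc, div_mul_eq_mul_div, div_le_iff₀ hvn, mul_assoc] at h4
      exact le_of_mul_le_mul_left h4 hr
  constructor
  · -- Lipschitz part, via the mean value inequality on the convex ball.
    intro y₁ h₁ y₂ h₂
    set g' : (Fin n → ℂ) → ((Fin n → ℂ) →L[ℝ] (Fin n → ℂ)) := fun z =>
      ((ContinuousLinearMap.id ℂ (Fin n → ℂ)) - Y.comp (fderiv ℂ F z)).restrictScalars ℝ
      with hg'
    have hder : ∀ z ∈ Metric.closedBall x r,
        HasFDerivWithinAt (fun y => y - Y (F y)) (g' z) (Metric.closedBall x r) z := by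
      intro z hz
      have h1 : HasFDerivAt (fun y => y - Y (F y))
          ((ContinuousLinearMap.id ℂ (Fin n → ℂ)) - Y.comp (fderiv ℂ F z)) z :=
        (hasFDerivAt_id z).sub (Y.hasFDerivAt.comp z (hFd z).hasFDerivAt)
      exact (h1.restrictScalars ℝ).hasFDerivWithinAt
    have hbound : ∀ z ∈ Metric.closedBall x r, ‖g' z‖ ≤ ρ := by
      intro z hz
      apply ContinuousLinearMap.opNorm_le_bound _ hρ.le
      intro v
      simpa [hg'] using key z hz v
    exact (convex_closedBall x r).norm_image_sub_le_of_norm_hasFDerivWithin_le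
      hder hbound h₂ h₁
  · -- Mapping part, by integrating the Krawczyk bound along the segment.
    intro y hy
    set v : Fin n → ℂ := y - x with hv
    have hvr : ‖v‖ ≤ r := mem_closedBall_iff_norm.mp hy
    set φ : ℝ → (Fin n → ℂ) := fun t => (x + t • v) - Y (F (x + t • v)) - x - t • Y (F x)
      with hφ
    have hmem : ∀ t ∈ Set.Icc (0:ℝ) 1, x + t • v ∈ Metric.closedBall x r := by
      intro t ht
      rw [Metric.mem_closedBall, dist_eq_norm]
      have e : x + t • v - x = t • v := by abel
      rw [e, norm_smul, Real.norm_eq_abs, abs_of_nonneg ht.1]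
      calc t * ‖v‖ ≤ 1 * r := mul_le_mul ht.2 hvr (norm_nonneg _) zero_le_one
        _ = r := one_mul r
    have hder : ∀ t ∈ Set.Icc (0:ℝ) 1, HasDerivWithinAt φ
        (v - Y (fderiv ℂ F (x + t • v) v) - Y (F x)) (Set.Icc 0 1) t := by
      intro t ht
      have hc : HasDerivAt (fun s : ℝ => x + s • v) v t := by
        simpa using ((hasDerivAt_id t).smul_const v).const_add x
      have hFc : HasDerivAt (fun s : ℝ => F (x + s • v))
          (fderiv ℂ F (x + t • v) v) t := by
        have := ((hFd (x + t • v)).hasFDerivAt.restrictScalars ℝ).comp_hasDerivAt t hc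
        exact this
      have hYFc : HasDerivAt (fun s : ℝ => Y (F (x + s • v)))
          (Y (fderiv ℂ F (x + t • v) v)) t :=
        (Y.restrictScalars ℝ).hasFDerivAt.comp_hasDerivAt t hFc
      have hlin : HasDerivAt (fun s : ℝ => s • Y (F x)) (Y (F x)) t := by
        simpa using (hasDerivAt_id t).smul_const (Y (F x))
      have H := ((hc.sub hYFc).sub (hasDerivAt_const t x)).sub hlin
      rw [sub_zero] at H
      exact H.hasDerivWithinAt
    have hbound : ∀ t ∈ Set.Icc (0:ℝ) 1,
        ‖v - Y (fderiv ℂ F (x + t • v) v) - Y (F x)‖ ≤ r * ρ := by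
      intro t ht
      have h := hK (x + t • v) (hmem t ht) v hvr
      have e : -Y (F x) + v - Y (fderiv ℂ F (x + t • v) v) =
          v - Y (fderiv ℂ F (x + t • v) v) - Y (F x) := by abel
      rwa [e] at h
    have hmv := (convex_Icc (0:ℝ) 1).norm_image_sub_le_of_norm_hasDerivWithin_le
      hder hbound (Set.left_mem_Icc.mpr zero_le_one) (Set.right_mem_Icc.mpr zero_le_one)
    have e1 : φ 1 - φ 0 = (y - Y (F y)) - x := by
      simp [hφ, hv]
    rw [e1] at hmv
    rw [Metric.mem_closedBall, dist_eq_norm]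
    simpa using hmv
end

section
/- Let G, H : ℂⁿ → ℂⁿ be continuously differentiable and, for t ∈ ℝ, set F_t(x) = G(x) + (t − t₀)·H(x), so that F_{t₀} = G. Let x ∈ ℂⁿ, r > 0, 0 < ρ < τ, and let Y : ℂⁿ → ℂⁿ be a continuous linear map. Assume: (i) the pointwise Krawczyk condition holds for (G, x, r, Y, ρ); (ii) M ≥ 0 satisfies ‖Y ∘ DH(z)‖ ≤ M (operator norm) for every z in the closed ball of radius r centered at x; (iii) ‖Y(H(x))‖ + r·M > 0; and (iv) 0 ≤ dt ≤ (τ − ρ)·r / (‖Y(H(x))‖ + r·M). Then for every t ∈ [t₀, t₀ + dt], the pointwise Krawczyk condition holds for (F_t, x, r, Y, τ); that is, for every z in the closed ball of radius r around x and every v with ‖v‖ ≤ r, ‖−Y(F_t(x)) + v − Y(DF_t(z)(v))‖ ≤ r·τ. -/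
/-- A priori stepsize bound (Theorem 3.1): if the Krawczyk condition holds for
`(G, x, r, Y, ρ)` with the affine linear homotopy `F_t = G + (t - t₀) • H`, and the
stepsize satisfies `dt ≤ (τ - ρ) r / (‖Y (H x)‖ + r M)` where `M` bounds the operator
norms `‖Y ∘ DH(z)‖` over the certified ball, then the Krawczyk condition holds for
`(F_t, x, r, Y, τ)` for every `t ∈ [t₀, t₀ + dt]`. -/
theorem apriori_stepsize_bound {n : ℕ}
    (G H : (Fin n → ℂ) → (Fin n → ℂ)) (hG : ContDiff ℂ 1 G) (hH : ContDiff ℂ 1 H)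
    (t₀ : ℝ) (x : Fin n → ℂ) (r ρ τ : ℝ) (hr : 0 < r) (hρ : 0 < ρ) (hρτ : ρ < τ)
    (Y : (Fin n → ℂ) →L[ℂ] (Fin n → ℂ))
    (hK : KrawczykCond G x r Y ρ)
    (M : ℝ) (hM0 : 0 ≤ M)
    (hM : ∀ z ∈ Metric.closedBall x r, ‖Y.comp (fderiv ℂ H z)‖ ≤ M)
    (hpos : 0 < ‖Y (H x)‖ + r * M)
    (dt : ℝ) (hdt0 : 0 ≤ dt)
    (hdt : dt ≤ (τ - ρ) * r / (‖Y (H x)‖ + r * M)) :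
    ∀ t ∈ Set.Icc t₀ (t₀ + dt),
      KrawczykCond (fun w => G w + (t - t₀) • H w) x r Y τ := by
  intro t ht z hz v hv
  set s := t - t₀ with hs
  have hs0 : 0 ≤ s := by simp [hs]; linarith [ht.1]
  have hs1 : s ≤ dt := by simp [hs]; linarith [ht.2]
  have hdG : DifferentiableAt ℂ G z := (hG.differentiable one_ne_zero) z
  have hdH : DifferentiableAt ℂ H z := (hH.differentiable one_ne_zero) z
  have hfd : fderiv ℂ (fun w => G w + s • H w) z
      = fderiv ℂ G z + s • fderiv ℂ H z := by
    rw [fderiv_fun_add (g := fun w => s • H w) hdG (hdH.const_smul s), fderiv_fun_const_smul hdH s]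
  have key : -Y (G x + s • H x) + v - Y ((fderiv ℂ G z + s • fderiv ℂ H z) v)
      = (-Y (G x) + v - Y (fderiv ℂ G z v))
        + (-(s • Y (H x)) + -(s • Y (fderiv ℂ H z v))) := by
    simp only [ContinuousLinearMap.add_apply, ContinuousLinearMap.smul_apply,
      map_add, ContinuousLinearMap.map_smul_of_tower]
    abel
  have h1 : ‖-Y (G x) + v - Y (fderiv ℂ G z v)‖ ≤ r * ρ := hK z hz v hv
  have h2 : ‖Y (fderiv ℂ H z v)‖ ≤ M * r := by
    calc ‖Y (fderiv ℂ H z v)‖ = ‖(Y.comp (fderiv ℂ H z)) v‖ := rfl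
      _ ≤ ‖Y.comp (fderiv ℂ H z)‖ * ‖v‖ := ContinuousLinearMap.le_opNorm _ _
      _ ≤ M * r := mul_le_mul (hM z hz) hv (norm_nonneg _) hM0
  have hbound : ‖-Y (G x + s • H x) + v - Y ((fderiv ℂ G z + s • fderiv ℂ H z) v)‖
      ≤ r * ρ + s * (‖Y (H x)‖ + r * M) := by
    rw [key]
    calc _ ≤ ‖-Y (G x) + v - Y (fderiv ℂ G z v)‖
          + ‖-(s • Y (H x)) + -(s • Y (fderiv ℂ H z v))‖ := norm_add_le _ _
      _ ≤ r * ρ + (‖s • Y (H x)‖ + ‖s • Y (fderiv ℂ H z v)‖) := by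
          refine add_le_add h1 ?_
          calc _ ≤ ‖-(s • Y (H x))‖ + ‖-(s • Y (fderiv ℂ H z v))‖ := norm_add_le _ _
            _ = _ := by rw [norm_neg, norm_neg]
      _ ≤ r * ρ + s * (‖Y (H x)‖ + r * M) := by
          rw [norm_smul, norm_smul, Real.norm_eq_abs, abs_of_nonneg hs0]
          nlinarith [norm_nonneg (Y (H x)), norm_nonneg (Y (fderiv ℂ H z v))]
  have hslast : s * (‖Y (H x)‖ + r * M) ≤ (τ - ρ) * r := by
    have : dt * (‖Y (H x)‖ + r * M) ≤ (τ - ρ) * r := by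
      have := mul_le_mul_of_nonneg_right hdt (le_of_lt hpos)
      rwa [div_mul_cancel₀ _ (ne_of_gt hpos)] at this
    nlinarith
  calc ‖-Y (G x + s • H x) + v - Y (fderiv ℂ (fun w => G w + s • H w) z v)‖
      = ‖-Y (G x + s • H x) + v - Y ((fderiv ℂ G z + s • fderiv ℂ H z) v)‖ := by rw [hfd]
    _ ≤ r * ρ + s * (‖Y (H x)‖ + r * M) := hbound
    _ ≤ r * ρ + (τ - ρ) * r := by linarith
    _ = r * τ := by ring
end

section
/- Let F : ℂⁿ → ℂⁿ admit a power series expansion centered at y ∈ ℂⁿ converging on a ball of radius at least r > 0 (i.e., F equals its Taylor series at y on that ball). Suppose the Fréchet derivative DF(y) is invertible, and set Y = DF(y)⁻¹. Let γ ≥ 0 satisfy ‖Y ∘ DᵏF(y)‖ ≤ k! · γ^(k−1) for every k ≥ 2, where DᵏF(y) is the k-th derivative (a continuous multilinear map) and the norm is the multilinear operator norm. Assume u := γ·r < 1. Then for every z with ‖z − y‖ < r, the operator norm of Y ∘ (DF(y) − DF(z)) is at most 1/(1−u)² − 1; equivalently, ‖Id − Y ∘ DF(z)‖ ≤ 1/(1−u)²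 − 1. -/
set_option maxHeartbeats 1000000


/-- Key analytic estimate in the proof of Proposition 4.3: if `F` equals its Taylor
series at `y` on a ball of radius at least `r`, `Y = DF(y)⁻¹`, and
`‖Y ∘ DᵏF(y)‖ ≤ k! γ^(k-1)` for all `k ≥ 2` with `u = γ r < 1`, then for every `z`
with `‖z - y‖ < r` one has `‖Y ∘ (DF(y) - DF(z))‖ ≤ 1/(1-u)² - 1`, equivalently
`‖Id - Y ∘ DF(z)‖ ≤ 1/(1-u)² - 1`. -/
theorem jacobian_variation_bound {n : ℕ}
    (F : (Fin n → ℂ) → (Fin n → ℂ)) (y : Fin n → ℂ) (r : ℝ) (hr : 0 < r)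
    (p : FormalMultilinearSeries ℂ (Fin n → ℂ) (Fin n → ℂ))
    (hp : HasFPowerSeriesOnBall F p y (ENNReal.ofReal r))
    (Y : (Fin n → ℂ) ≃L[ℂ] (Fin n → ℂ))
    (hY : (Y.symm : (Fin n → ℂ) →L[ℂ] (Fin n → ℂ)) = fderiv ℂ F y)
    (γ : ℝ) (hγ0 : 0 ≤ γ)
    (hγ : ∀ k : ℕ, 2 ≤ k →
      ‖(Y : (Fin n → ℂ) →L[ℂ] (Fin n → ℂ)).compContinuousMultilinearMap
          (iteratedFDeriv ℂ k F y)‖ ≤ (k.factorial : ℝ) * γ ^ (k - 1))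
    (hu : γ * r < 1) :
    ∀ z : Fin n → ℂ, ‖z - y‖ < r →
      ‖(Y : (Fin n → ℂ) →L[ℂ] (Fin n → ℂ)).comp (fderiv ℂ F y - fderiv ℂ F z)‖
          ≤ 1 / (1 - γ * r) ^ 2 - 1 ∧
      ‖ContinuousLinearMap.id ℂ (Fin n → ℂ)
          - (Y : (Fin n → ℂ) →L[ℂ] (Fin n → ℂ)).comp (fderiv ℂ F z)‖
          ≤ 1 / (1 - γ * r) ^ 2 - 1 := by
  set Y' : (Fin n → ℂ) →L[ℂ] (Fin n → ℂ) := (Y : (Fin n → ℂ) →L[ℂ] (Fin n → ℂ)) with hY'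
  set G : (Fin n → ℂ) → (Fin n → ℂ) := fun x => Y' (F x) with hG
  set q : FormalMultilinearSeries ℂ (Fin n → ℂ) (Fin n → ℂ) := Y'.compFormalMultilinearSeries p with hqdef
  have hq : HasFPowerSeriesOnBall G q y (ENNReal.ofReal r) :=
    Y'.comp_hasFPowerSeriesOnBall hp
  have hq' : HasFPowerSeriesOnBall (fderiv ℂ G) q.derivSeries y (ENNReal.ofReal r) :=
    hq.fderiv
  set u : ℝ := γ * r with hudef
  have hu0 : 0 ≤ u := mul_nonneg hγ0 hr.le
  have hu1 : (1 : ℝ) - u ≠ 0 := by linarith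
  -- relation of iterated derivatives of G and F
  have keyIter : ∀ k : ℕ, iteratedFDeriv ℂ k G y
      = Y'.compContinuousMultilinearMap (iteratedFDeriv ℂ k F y) := by
    intro k
    rw [← iteratedFDerivWithin_univ, ← iteratedFDerivWithin_univ]
    exact Y.iteratedFDerivWithin_comp_left F uniqueDiffOn_univ (Set.mem_univ y) k
  -- chain rule on the ball
  have hder : ∀ z : Fin n → ℂ, ‖z - y‖ < r → fderiv ℂ G z = Y'.comp (fderiv ℂ F z) := by
    intro z hz
    have hzmem : z ∈ Metric.eball y (ENNReal.ofReal r) := by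
      rw [EMetric.mem_ball, edist_eq_enorm_sub, ← ofReal_norm]
      exact (ENNReal.ofReal_lt_ofReal_iff hr).2 hz
    have hdiff : DifferentiableAt ℂ F z :=
      (hp.analyticAt_of_mem hzmem).differentiableAt
    exact (Y'.hasFDerivAt.comp z hdiff.hasFDerivAt).fderiv
  -- the geometric-type sum
  have hu' : ‖u‖ < 1 := by rwa [Real.norm_of_nonneg hu0]
  have A : HasSum (fun k : ℕ => ((k : ℝ) + 1) * u ^ k) (1 / (1 - u) ^ 2) := by
    have A1 := hasSum_coe_mul_geometric_of_norm_lt_one (𝕜 := ℝ) hu'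
    have A2 := hasSum_geometric_of_norm_lt_one hu'
    have := A1.add A2
    have heq : u / (1 - u) ^ 2 + (1 - u)⁻¹ = 1 / (1 - u) ^ 2 := by
      field_simp
      ring
    rw [heq] at this
    convert this using 2 with k
    · rfl
    ring
  have B : HasSum (fun k : ℕ => ((k : ℝ) + 2) * u ^ (k + 1)) (1 / (1 - u) ^ 2 - 1) := by
    have := (hasSum_nat_add_iff' (f := fun k : ℕ => ((k : ℝ) + 1) * u ^ k) 1).2 A
    simp only [Finset.range_one, Finset.sum_singleton, Nat.cast_zero, zero_add, pow_zero,
      mul_one] at this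
    convert this using 2 with k
    · rfl
    push_cast
    ring
  intro z hz
  set w : Fin n → ℂ := z - y with hwdef
  have hwr : ‖w‖ < r := hz
  have hwmem : w ∈ Metric.eball (0 : Fin n → ℂ) (ENNReal.ofReal r) := by
    rw [EMetric.mem_ball, edist_zero_right, ← ofReal_norm]
    exact (ENNReal.ofReal_lt_ofReal_iff hr).2 hwr
  have h0mem : (0 : Fin n → ℂ) ∈ EMetric.ball (0 : Fin n → ℂ) (ENNReal.ofReal r) :=
    EMetric.mem_ball_self (ENNReal.ofReal_pos.2 hr)
  -- the sum for fderiv G z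
  have HS : HasSum (fun k => q.derivSeries k (fun _ => w)) (fderiv ℂ G z) := by
    have := hq'.hasSum hwmem
    rwa [show y + w = z by rw [hwdef]; abel] at this
  -- identify the zeroth term with fderiv G y
  have HS0 : q.derivSeries 0 (fun _ => w) = fderiv ℂ G y := by
    have HS' : HasSum (fun k => q.derivSeries k (fun _ => (0 : Fin n → ℂ))) (fderiv ℂ G y) := by
      have := hq'.hasSum h0mem
      rwa [add_zero] at this
    have hsingle : HasSum (fun k => q.derivSeries k (fun _ => (0 : Fin n → ℂ)))
        (q.derivSeries 0 (fun _ => (0 : Fin n → ℂ))) := by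
      apply hasSum_single
      intro k hk
      obtain ⟨m, rfl⟩ := Nat.exists_eq_succ_of_ne_zero hk
      exact (q.derivSeries (m + 1)).map_zero
    have h00 : q.derivSeries 0 (fun _ => (0 : Fin n → ℂ)) = q.derivSeries 0 (fun _ => w) := by
      congr 1
      funext i
      exact i.elim0
    rw [← h00]
    exact hsingle.unique HS'
  have HS1 : HasSum (fun k => q.derivSeries (k + 1) (fun _ => w))
      (fderiv ℂ G z - fderiv ℂ G y) := by
    have := (hasSum_nat_add_iff' (f := fun k => q.derivSeries k (fun _ => w)) 1).2 HS
    simpa [HS0] using this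
  -- term bound
  have hterm : ∀ k : ℕ, ‖q.derivSeries (k + 1) (fun _ => w)‖ ≤ ((k : ℝ) + 2) * u ^ (k + 1) := by
    intro k
    have e := hq'.factorial_smul w (k + 1)
    set a := ‖q.derivSeries (k + 1) (fun _ => w)‖ with ha
    set c1 : ℝ := ((k + 1).factorial : ℝ) with hc1
    have hfacpos : (0 : ℝ) < c1 := by rw [hc1]; exact_mod_cast (k + 1).factorial_pos
    have hnorm : c1 * a = ‖iteratedFDeriv ℂ (k + 1) (fderiv ℂ G) y (fun _ => w)‖ := by
      rw [ha, hc1, ← e, ← Nat.cast_smul_eq_nsmul ℝ, norm_smul, Real.norm_natCast]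
    have h1 : ‖iteratedFDeriv ℂ (k + 1) (fderiv ℂ G) y (fun _ => w)‖
        ≤ ‖iteratedFDeriv ℂ (k + 1) (fderiv ℂ G) y‖ * ‖w‖ ^ (k + 1) := by
      simpa [Finset.prod_const] using
        (iteratedFDeriv ℂ (k + 1) (fderiv ℂ G) y).le_opNorm (fun _ => w)
    have h3 : ‖iteratedFDeriv ℂ (k + 1) (fderiv ℂ G) y‖
        ≤ ((k + 2).factorial : ℝ) * γ ^ (k + 1) := by
      rw [norm_iteratedFDeriv_fderiv]
      have h := hγ (k + 2) (by omega)
      rw [← keyIter (k + 2)] at h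
      simpa using h
    have hb : c1 * a ≤ ((k + 2).factorial : ℝ) * γ ^ (k + 1) * ‖w‖ ^ (k + 1) := by
      rw [hnorm]
      exact h1.trans (mul_le_mul_of_nonneg_right h3 (by positivity))
    have hfac : ((k + 2).factorial : ℝ) = ((k : ℝ) + 2) * c1 := by
      rw [hc1, show k + 2 = (k + 1) + 1 from rfl, Nat.factorial_succ]
      push_cast
      ring
    have ha2 : a ≤ ((k : ℝ) + 2) * (γ ^ (k + 1) * ‖w‖ ^ (k + 1)) := by
      have h' : c1 * a ≤ c1 * (((k : ℝ) + 2) * (γ ^ (k + 1) * ‖w‖ ^ (k + 1))) := by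
        rw [hfac] at hb
        exact hb.trans_eq (by ring)
      exact le_of_mul_le_mul_left h' hfacpos
    have hγw : (γ * ‖w‖) ^ (k + 1) ≤ u ^ (k + 1) := by
      apply pow_le_pow_left₀ (by positivity)
      exact mul_le_mul_of_nonneg_left hwr.le hγ0
    calc a ≤ ((k : ℝ) + 2) * (γ * ‖w‖) ^ (k + 1) := by rw [mul_pow]; exact ha2
      _ ≤ ((k : ℝ) + 2) * u ^ (k + 1) := mul_le_mul_of_nonneg_left hγw (by positivity)
  -- summability of norms and total bound
  have hsumnorm : Summable (fun k => ‖q.derivSeries (k + 1) (fun _ => w)‖) :=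
    Summable.of_nonneg_of_le (fun k => norm_nonneg _) hterm B.summable
  have hmain : ‖fderiv ℂ G y - fderiv ℂ G z‖ ≤ 1 / (1 - u) ^ 2 - 1 := by
    rw [norm_sub_rev, ← HS1.tsum_eq]
    calc ‖∑' k, q.derivSeries (k + 1) (fun _ => w)‖
        ≤ ∑' k, ‖q.derivSeries (k + 1) (fun _ => w)‖ := norm_tsum_le_tsum_norm hsumnorm
      _ ≤ ∑' k : ℕ, ((k : ℝ) + 2) * u ^ (k + 1) := Summable.tsum_le_tsum hterm hsumnorm B.summable
      _ = 1 / (1 - u) ^ 2 - 1 := B.tsum_eq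
  have hfirst : ‖Y'.comp (fderiv ℂ F y - fderiv ℂ F z)‖ ≤ 1 / (1 - u) ^ 2 - 1 := by
    have : Y'.comp (fderiv ℂ F y - fderiv ℂ F z) = fderiv ℂ G y - fderiv ℂ G z := by
      rw [ContinuousLinearMap.comp_sub, ← hder y (by simp [hr]), ← hder z hz]
    rwa [this]
  refine ⟨hfirst, ?_⟩
  have hid : ContinuousLinearMap.id ℂ (Fin n → ℂ) - Y'.comp (fderiv ℂ F z)
      = Y'.comp (fderiv ℂ F y - fderiv ℂ F z) := by
    rw [ContinuousLinearMap.comp_sub, ← hY, ContinuousLinearEquiv.coe_comp_coe_symm]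
  rw [hid]
  exact hfirst
end

section
/- Let G, H : ℂⁿ → ℂⁿ be continuously differentiable and, for t ∈ ℝ, set F_t(x) = G(x) + (t − t₀)·H(x). Let x ∈ ℂⁿ, r > 0, 0 < ρ < τ < 1, and let Y : ℂⁿ → ℂⁿ be an invertible continuous linear map. Assume: (i) the pointwise Krawczyk condition holds for (G, x, r, Y, ρ); (ii) M ≥ 0 satisfies ‖Y ∘ DH(z)‖ ≤ M for every z in the closed ball of radius r centered at x; (iii) ‖Y(H(x))‖ + r·M > 0; and (iv) 0 ≤ dt ≤ (τ − ρ)·r / (‖Y(H(x))‖ + r·M). Then for every t ∈ [t₀, t₀ + dt], the system F_t has a unique zero in the closed ball of radius r centered at x. -/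
open Metric Set

/-- Krawczyk certification: a contraction argument. -/
lemma krawczyk_certify {n : ℕ} (F : (Fin n → ℂ) → (Fin n → ℂ)) (hF : Differentiable ℂ F)
    (x : Fin n → ℂ) (r τ : ℝ) (hr : 0 < r) (hτ0 : 0 ≤ τ) (hτ1 : τ < 1)
    (Y : (Fin n → ℂ) ≃L[ℂ] (Fin n → ℂ))
    (hK : KrawczykCond F x r (Y : (Fin n → ℂ) →L[ℂ] (Fin n → ℂ)) τ) :
    ∃! xs : Fin n → ℂ, xs ∈ Metric.closedBall x r ∧ F xs = 0 := by
  set Yc := (Y : (Fin n → ℂ) →L[ℂ] (Fin n → ℂ)) with hYc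
  -- the linearized contraction bound
  have hLr : ∀ z ∈ closedBall x r, ∀ v : Fin n → ℂ, ‖v‖ ≤ r →
      ‖v - Yc (fderiv ℂ F z v)‖ ≤ r * τ := by
    intro z hz v hv
    have h1 := hK z hz v hv
    have h2 := hK z hz (-v) (by simpa using hv)
    have e : -Yc (F x) + -v - Yc (fderiv ℂ F z (-v))
        = -(-Yc (F x) + v - Yc (fderiv ℂ F z v)) - Yc (F x) - Yc (F x) := by
      simp [map_neg]; abel
    rw [e] at h2
    have : ‖(2:ℝ) • (v - Yc (fderiv ℂ F z v))‖ ≤ 2 * (r * τ) := by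
      have e2 : (2:ℝ) • (v - Yc (fderiv ℂ F z v))
          = (-Yc (F x) + v - Yc (fderiv ℂ F z v))
            - (-(-Yc (F x) + v - Yc (fderiv ℂ F z v)) - Yc (F x) - Yc (F x)) := by
        have : ((2:ℝ) • (v - Yc (fderiv ℂ F z v))) = (v - Yc (fderiv ℂ F z v)) + (v - Yc (fderiv ℂ F z v)) := two_smul ℝ _
        rw [this]; abel
      rw [e2]
      calc ‖_ - _‖ ≤ ‖(-Yc (F x) + v - Yc (fderiv ℂ F z v))‖
            + ‖(-(-Yc (F x) + v - Yc (fderiv ℂ F z v)) - Yc (F x) - Yc (F x))‖ := norm_sub_le _ _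
        _ ≤ r * τ + r * τ := add_le_add h1 h2
        _ = 2 * (r * τ) := by ring
    rw [norm_smul] at this
    simp only [Real.norm_ofNat] at this
    linarith
  -- operator norm bound
  have hLnorm : ∀ z ∈ closedBall x r,
      ‖ContinuousLinearMap.id ℂ (Fin n → ℂ) - Yc.comp (fderiv ℂ F z)‖ ≤ τ := by
    intro z hz
    refine ContinuousLinearMap.opNorm_le_bound _ hτ0 (fun w => ?_)
    rcases eq_or_ne w 0 with h0 | h0
    · simp [h0]
    have hwpos : (0:ℝ) < ‖w‖ := norm_pos_iff.2 h0
    have hv : ‖(r / ‖w‖) • w‖ ≤ r := by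
      rw [norm_smul, Real.norm_eq_abs, abs_of_pos (by positivity)]
      rw [div_mul_cancel₀ _ (ne_of_gt hwpos)]
    have key := hLr z hz ((r / ‖w‖) • w) hv
    have lin : ((r / ‖w‖) • w) - Yc (fderiv ℂ F z ((r / ‖w‖) • w))
        = (r / ‖w‖) • (w - Yc (fderiv ℂ F z w)) := by
      rw [(fderiv ℂ F z).map_smul_of_tower, Yc.map_smul_of_tower, smul_sub]
    rw [lin, norm_smul, Real.norm_eq_abs, abs_of_pos (by positivity)] at key
    have : ‖w - Yc (fderiv ℂ F z w)‖ ≤ τ * ‖w‖ := by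
      rw [div_mul_eq_mul_div, div_le_iff₀ hwpos] at key
      nlinarith [key, hr]
    simpa [ContinuousLinearMap.sub_apply] using this
  set N : (Fin n → ℂ) → (Fin n → ℂ) := fun z => z - Yc (F z) with hN
  have hNderiv : ∀ z, HasFDerivAt N
      (ContinuousLinearMap.id ℂ (Fin n → ℂ) - Yc.comp (fderiv ℂ F z)) z := by
    intro z
    exact (hasFDerivAt_id z).sub (Yc.hasFDerivAt.comp z (hF z).hasFDerivAt)
  -- Lipschitz on the ball
  have hLip : ∀ a ∈ closedBall x r, ∀ b ∈ closedBall x r, ‖N a - N b‖ ≤ τ * ‖a - b‖ := by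
    intro a ha b hb
    exact (convex_closedBall x r).norm_image_sub_le_of_norm_hasFDerivWithin_le
      (fun z hz => (hNderiv z).hasFDerivWithinAt) hLnorm hb ha
  -- self-map bound
  have hself : ∀ z ∈ closedBall x r, ‖N z - x‖ ≤ r * τ := by
    intro z hz
    have hzx : ‖z - x‖ ≤ r := mem_closedBall_iff_norm.1 hz
    set p : ℝ → (Fin n → ℂ) :=
      fun s => (x + s • (z - x)) - Yc (F (x + s • (z - x))) - s • (Yc (F x)) with hp
    have hmem : ∀ s ∈ Icc (0:ℝ) 1, x + s • (z - x) ∈ closedBall x r := by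
      intro s hs
      rw [mem_closedBall_iff_norm]
      have : ‖x + s • (z - x) - x‖ = ‖s • (z - x)‖ := by congr 1; abel
      rw [this, norm_smul, Real.norm_eq_abs, abs_of_nonneg hs.1]
      calc s * ‖z - x‖ ≤ 1 * r := mul_le_mul hs.2 hzx (norm_nonneg _) zero_le_one
        _ = r := one_mul r
    have hpd : ∀ s ∈ Icc (0:ℝ) 1, HasDerivWithinAt p
        ((z - x) - Yc (fderiv ℂ F (x + s • (z - x)) (z - x)) - Yc (F x)) (Icc 0 1) s := by
      intro s hs
      have hγ : HasDerivAt (fun s : ℝ => x + s • (z - x)) (z - x) s := by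
        simpa using ((hasDerivAt_id s).smul_const (z - x)).const_add x
      have hFγ : HasDerivAt (fun s : ℝ => F (x + s • (z - x)))
          (fderiv ℂ F (x + s • (z - x)) (z - x)) s := by
        exact
          (((hF (x + s • (z - x))).hasFDerivAt.restrictScalars ℝ).comp_hasDerivAt s hγ)
      have hYFγ : HasDerivAt (fun s : ℝ => Yc (F (x + s • (z - x))))
          (Yc (fderiv ℂ F (x + s • (z - x)) (z - x))) s := by
        exact
          ((Yc.restrictScalars ℝ).hasFDerivAt.comp_hasDerivAt s hFγ)
      have hsc : HasDerivAt (fun s : ℝ => s • (Yc (F x))) (Yc (F x)) s := by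
        simpa using (hasDerivAt_id s).smul_const (Yc (F x))
      exact ((hγ.sub hYFγ).sub hsc).hasDerivWithinAt
    have hbound : ∀ s ∈ Ico (0:ℝ) 1,
        ‖(z - x) - Yc (fderiv ℂ F (x + s • (z - x)) (z - x)) - Yc (F x)‖ ≤ r * τ := by
      intro s hs
      have := hK (x + s • (z - x)) (hmem s ⟨hs.1, hs.2.le⟩) (z - x) hzx
      have e : -Yc (F x) + (z - x) - Yc (fderiv ℂ F (x + s • (z - x)) (z - x))
          = (z - x) - Yc (fderiv ℂ F (x + s • (z - x)) (z - x)) - Yc (F x) := by abel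
      rwa [e] at this
    have := norm_image_sub_le_of_norm_deriv_le_segment_01' hpd hbound
    have e01 : p 1 - p 0 = N z - x := by
      have h1 : x + (z - x) = z := by abel
      simp only [hp, hN, one_smul, zero_smul, add_zero, sub_zero, h1]
      abel
    rwa [e01] at this
  have hmaps : MapsTo N (closedBall x r) (closedBall x r) := by
    intro z hz
    rw [mem_closedBall_iff_norm]
    calc ‖N z - x‖ ≤ r * τ := hself z hz
      _ ≤ r * 1 := by nlinarith
      _ = r := mul_one r
  -- fixed point of N on the ball
  have hcomplete : IsComplete (closedBall x r) := (isClosed_closedBall).isComplete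
  set K : NNReal := ⟨τ, hτ0⟩ with hKdef
  have hcontr : ContractingWith K (hmaps.restrict N _ _) := by
    constructor
    · exact_mod_cast hτ1
    · refine LipschitzWith.of_dist_le_mul (fun a b => ?_)
      have := hLip a a.2 b b.2
      simp only [MapsTo.restrict, Subtype.dist_eq, dist_eq_norm]
      exact this
  have hxmem : x ∈ closedBall x r := mem_closedBall_self hr.le
  obtain ⟨xs, hxs_mem, hxs_fix, -, -⟩ :=
    hcontr.exists_fixedPoint' hcomplete hmaps hxmem (edist_ne_top _ _)
  have hFxs : F xs = 0 := by
    have : xs - Yc (F xs) = xs := hxs_fix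
    have hY0 : Yc (F xs) = 0 := by
      have := sub_eq_self.mp this
      exact this
    rw [hYc] at hY0
    apply Y.injective
    rw [map_zero]
    simpa using hY0
  refine ⟨xs, ⟨hxs_mem, hFxs⟩, ?_⟩
  rintro y ⟨hy_mem, hFy⟩
  have hNy : N y = y := by simp [hN, hFy]
  have hNxs : N xs = xs := hxs_fix
  have := hLip y hy_mem xs hxs_mem
  rw [hNy, hNxs] at this
  have hnn : (0:ℝ) ≤ ‖y - xs‖ := norm_nonneg _
  have : ‖y - xs‖ = 0 := by nlinarith
  have := sub_eq_zero.mp (norm_eq_zero.mp this)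
  exact this

/-- Theorem 3.1 combined with the Krawczyk certification theorem: the a priori stepsize
bound guarantees that for every `t ∈ [t₀, t₀ + dt]` the system
`F_t = G + (t - t₀) • H` has a unique zero in the closed ball of radius `r` around `x`. -/
theorem apriori_stepsize_certified_enclosure {n : ℕ}
    (G H : (Fin n → ℂ) → (Fin n → ℂ)) (hG : ContDiff ℂ 1 G) (hH : ContDiff ℂ 1 H)
    (t₀ : ℝ) (x : Fin n → ℂ) (r ρ τ : ℝ) (hr : 0 < r)
    (hρ : 0 < ρ) (hρτ : ρ < τ) (hτ : τ < 1)
    (Y : (Fin n → ℂ) ≃L[ℂ] (Fin n → ℂ))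
    (hK : KrawczykCond G x r (Y : (Fin n → ℂ) →L[ℂ] (Fin n → ℂ)) ρ)
    (M : ℝ) (hM0 : 0 ≤ M)
    (hM : ∀ z ∈ Metric.closedBall x r,
      ‖((Y : (Fin n → ℂ) →L[ℂ] (Fin n → ℂ))).comp (fderiv ℂ H z)‖ ≤ M)
    (hpos : 0 < ‖Y (H x)‖ + r * M)
    (dt : ℝ) (hdt0 : 0 ≤ dt)
    (hdt : dt ≤ (τ - ρ) * r / (‖Y (H x)‖ + r * M)) :
    ∀ t ∈ Set.Icc t₀ (t₀ + dt),
      ∃! xs : Fin n → ℂ, xs ∈ Metric.closedBall x r ∧ G xs + (t - t₀) • H xs = 0 := by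
  intro t ht
  set Yc := (Y : (Fin n → ℂ) →L[ℂ] (Fin n → ℂ)) with hYc
  set s : ℝ := t - t₀ with hs
  have hs0 : 0 ≤ s := by simp [hs]; linarith [ht.1]
  have hsdt : s ≤ dt := by simp [hs]; linarith [ht.2]
  set F : (Fin n → ℂ) → (Fin n → ℂ) := fun z => G z + (t - t₀) • H z with hF
  have hGd : Differentiable ℂ G := hG.differentiable one_ne_zero
  have hHd : Differentiable ℂ H := hH.differentiable one_ne_zero
  have hFd : Differentiable ℂ F := fun z => ((hGd z).add ((hHd z).const_smul (t - t₀)))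
  have hDF : ∀ z, fderiv ℂ F z = fderiv ℂ G z + (t - t₀) • fderiv ℂ H z := by
    intro z
    exact ((hGd z).hasFDerivAt.add ((hHd z).hasFDerivAt.const_smul (t - t₀))).fderiv
  -- dt * (‖Y H x‖ + r M) ≤ (τ - ρ) * r
  have hdtP : dt * (‖Y (H x)‖ + r * M) ≤ (τ - ρ) * r := by
    rw [← le_div_iff₀ hpos]; exact hdt
  have hKF : KrawczykCond F x r Yc τ := by
    intro z hz v hv
    have e1 : Yc (F x) = Yc (G x) + (t - t₀) • Yc (H x) := by
      simp [hF, map_add, Yc.map_smul_of_tower]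
    have e2 : Yc (fderiv ℂ F z v) = Yc (fderiv ℂ G z v) + (t - t₀) • Yc (fderiv ℂ H z v) := by
      rw [hDF z]
      simp [ContinuousLinearMap.add_apply, ContinuousLinearMap.smul_apply, map_add,
        Yc.map_smul_of_tower]
    have key : -Yc (F x) + v - Yc (fderiv ℂ F z v)
        = (-Yc (G x) + v - Yc (fderiv ℂ G z v))
          + (-((t - t₀) • Yc (H x)) - (t - t₀) • Yc (fderiv ℂ H z v)) := by
      rw [e1, e2]; abel
    have hDHv : ‖Yc (fderiv ℂ H z v)‖ ≤ M * r := by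
      have h1 : ‖(Yc.comp (fderiv ℂ H z)) v‖ ≤ ‖Yc.comp (fderiv ℂ H z)‖ * ‖v‖ :=
        (Yc.comp (fderiv ℂ H z)).le_opNorm v
      have h2 := hM z hz
      calc ‖Yc (fderiv ℂ H z v)‖ = ‖(Yc.comp (fderiv ℂ H z)) v‖ := by
            simp [ContinuousLinearMap.comp_apply]
        _ ≤ ‖Yc.comp (fderiv ℂ H z)‖ * ‖v‖ := h1
        _ ≤ M * r := by
            apply mul_le_mul h2 hv (norm_nonneg _) hM0
    calc ‖-Yc (F x) + v - Yc (fderiv ℂ F z v)‖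
        ≤ ‖-Yc (G x) + v - Yc (fderiv ℂ G z v)‖
          + ‖(-((t - t₀) • Yc (H x)) - (t - t₀) • Yc (fderiv ℂ H z v))‖ := by
          rw [key]; exact norm_add_le _ _
      _ ≤ r * ρ + (s * ‖Yc (H x)‖ + s * (M * r)) := by
          refine add_le_add (hK z hz v hv) ?_
          calc ‖(-((t - t₀) • Yc (H x)) - (t - t₀) • Yc (fderiv ℂ H z v))‖
              ≤ ‖(t - t₀) • Yc (H x)‖ + ‖(t - t₀) • Yc (fderiv ℂ H z v)‖ := by
                refine (norm_sub_le _ _).trans ?_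
                simp
            _ = s * ‖Yc (H x)‖ + s * ‖Yc (fderiv ℂ H z v)‖ := by
                rw [norm_smul, norm_smul, Real.norm_eq_abs, abs_of_nonneg hs0]
            _ ≤ s * ‖Yc (H x)‖ + s * (M * r) := by
                exact add_le_add le_rfl (mul_le_mul_of_nonneg_left hDHv hs0)
      _ ≤ r * τ := by
          have hP : s * (‖Y (H x)‖ + r * M) ≤ (τ - ρ) * r := by
            calc s * (‖Y (H x)‖ + r * M) ≤ dt * (‖Y (H x)‖ + r * M) :=
                  mul_le_mul_of_nonneg_right hsdt hpos.le
              _ ≤ (τ - ρ) * r := hdtP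
          have : (Yc (H x)) = Y (H x) := rfl
          rw [this] at *
          nlinarith [hP]
  have := krawczyk_certify F hFd x r τ hr (by linarith) hτ Y hKF
  simpa [hF] using this
end
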